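/- arXiv:1302.2675 — 3 statements merged into one kernel-verified Lean document; each statement's English description precedes it below -/
import Mathlib

section
/- A run DAG G is rejecting if and only if there exists k ∈ ℕ such that the labeling λ^k is legal. -/
/-- Strict lexicographic order on finite 0-1 profiles. -/
def ProfLt (a b : List Bool) : Prop := List.Lex (· < ·) a b

/-- Non-strict lexicographic order on finite 0-1 profiles. -/
def ProfLe (a b : List Bool) : Prop := a = b ∨ ProfLt a b

/-- A nondeterministic Büchi automaton on infinite words. -/
structure NBW (Q : Type) (σ : Type) where
  init : Set Q
  trans : Q → σ → Set Q
  acc : Q → Bool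

namespace NBW

variable {Q σ : Type} (A : NBW Q σ) (w : ℕ → σ)

/-- `(q,i)` is a vertex of the run DAG of `A` on `w`. -/
def InDag (v : Q × ℕ) : Prop :=
  ∃ p : ℕ → Q, p 0 ∈ A.init ∧ (∀ j, j < v.2 → p (j + 1) ∈ A.trans (p j) (w j)) ∧ p v.2 = v.1

/-- Edge of the run DAG. -/
def Edge (u v : Q × ℕ) : Prop :=
  A.InDag w u ∧ v.2 = u.2 + 1 ∧ v.1 ∈ A.trans u.1 (w u.2)

/-- An infinite initial path through the (sub-)DAG with edge relation `E`. -/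
def IsPath (E : Q × ℕ → Q × ℕ → Prop) (π : ℕ → Q × ℕ) : Prop :=
  (π 0).1 ∈ A.init ∧ (π 0).2 = 0 ∧ ∀ i, E (π i) (π (i + 1))

/-- An accepting path: initial and visiting F-nodes infinitely often. -/
def AcceptingPath (E : Q × ℕ → Q × ℕ → Prop) (π : ℕ → Q × ℕ) : Prop :=
  A.IsPath E π ∧ ∀ N, ∃ i, N ≤ i ∧ A.acc (π i).1 = true

/-- Profile (sequence of acceptance labels) of the first `i+1` states of `p`. -/
def profileOf (p : ℕ → Q) (i : ℕ) : List Bool :=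
  (List.range (i + 1)).map fun j => A.acc (p j)

/-- `p` encodes a finite initial run ending at node `v`. -/
def FinRunTo (p : ℕ → Q) (v : Q × ℕ) : Prop :=
  p 0 ∈ A.init ∧ (∀ j, j < v.2 → p (j + 1) ∈ A.trans (p j) (w j)) ∧ p v.2 = v.1

/-- `h` assigns to each node the lexicographically maximal profile
over all finite initial runs to it. -/
def IsProfileFun (h : Q × ℕ → List Bool) : Prop :=
  ∀ v, A.InDag w v →
    (∃ p, A.FinRunTo w p v ∧ A.profileOf p v.2 = h v) ∧
    ∀ p, A.FinRunTo w p v → ProfLe (A.profileOf p v.2) (h v)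

/-- Edges of the pruned DAG `G'`: only edges from predecessors of
lexicographically maximal profile are kept. -/
def Edge' (h : Q × ℕ → List Bool) (u v : Q × ℕ) : Prop :=
  A.Edge w u v ∧ ∀ u', A.Edge w u' v → ¬ ProfLt (h u) (h u')

/-- `v` is finite in `G'`: it has finitely many descendants in `G'`. -/
def FiniteIn' (h : Q × ℕ → List Bool) (v : Q × ℕ) : Prop :=
  Set.Finite {u | Relation.ReflTransGen (A.Edge' w h) v u}

/-- Vertices of `G''`: vertices of the run DAG that are not finite in `G'`. -/
def InDag'' (h : Q × ℕ → List Bool) (v : Q × ℕ) : Prop :=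
  A.InDag w v ∧ ¬ A.FiniteIn' w h v

/-- Edges of `G''`. -/
def Edge'' (h : Q × ℕ → List Bool) (u v : Q × ℕ) : Prop :=
  A.Edge' w h u v ∧ A.InDag'' w h u ∧ A.InDag'' w h v

/-- `lam` is the retrospective labeling `λ^k`: ⊤ at levels ≤ k, ⊥ on F-nodes
after level k, inherited along `G'`-edges otherwise. -/
def IsRetroLabeling (h : Q × ℕ → List Bool) (k : ℕ) (lam : Q × ℕ → Bool) : Prop :=
  (∀ u, A.InDag w u → u.2 ≤ k → lam u = true) ∧
  (∀ u, A.InDag w u → k < u.2 → A.acc u.1 = true → lam u = false) ∧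
  (∀ u v, k < v.2 → A.acc v.1 = false → A.Edge' w h u v → lam v = lam u)

/-- A labeling is legal when every ⊥-labeled node is finite in `G'`. -/
def Legal (h : Q × ℕ → List Bool) (lam : Q × ℕ → Bool) : Prop :=
  ∀ u, A.InDag w u → lam u = false → A.FiniteIn' w h u

/-- `α(u)`: the number of ⊤-labeled profile-equivalence classes on `u`'s level
whose profile is strictly greater than `h u`. -/
noncomputable def alphaCount (h : Q × ℕ → List Bool) (lam : Q × ℕ → Bool) (u : Q × ℕ) : ℕ :=
  Set.ncard {p : List Bool | ∃ v, A.InDag w v ∧ v.2 = u.2 ∧ lam v = true ∧ h v = p ∧ ProfLt (h u) p}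

/-- The `k`-retrospective ranking (with top rank `m`). -/
noncomputable def retroRank (h : Q × ℕ → List Bool) (lam : Q × ℕ → Bool) (k m : ℕ)
    (u : Q × ℕ) : ℕ :=
  if u.2 ≤ k then m
  else if lam u then 2 * A.alphaCount w h lam u + 1 else 2 * A.alphaCount w h lam u

/-- `m = 2 |Q \ F|`. -/
def mBound [Fintype Q] : ℕ :=
  2 * Finset.card (Finset.univ.filter fun q => A.acc q = false)

end NBW

namespace NBW

open List

variable {Q σ : Type} {A : NBW Q σ} {w : ℕ → σ} {h : Q × ℕ → List Bool}

theorem profLt_iff {a b : List Bool} : ProfLt a b ↔ a < b := Iff.rfl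

theorem profLe_iff {a b : List Bool} : ProfLe a b ↔ a ≤ b := by
  rw [le_iff_lt_or_eq, or_comm]; exact Iff.rfl

theorem append_lt_append : ∀ {a b : List Bool}, a.length = b.length → a < b →
    ∀ x y : Bool, a ++ [x] < b ++ [y] := by
  intro a
  induction a with
  | nil => intro b hl hab x y; cases b with
    | nil => exact absurd hab (lt_irrefl _)
    | cons d b => simp at hl
  | cons c a ih =>
    intro b hl hab x y
    cases b with
    | nil => simp at hl
    | cons d b =>
      have hab' : List.Lex (· < ·) (c :: a) (d :: b) := hab
      have goal : List.Lex (· < ·) (c :: (a ++ [x])) (d :: (b ++ [y])) := by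
        cases hab' with
        | rel hr => exact List.Lex.rel hr
        | cons ht => exact List.Lex.cons (ih (by simpa using hl) ht x y)
      simpa using goal

theorem append_le_append {a b : List Bool} (hl : a.length = b.length) (hab : a ≤ b)
    (x : Bool) : a ++ [x] ≤ b ++ [x] := by
  rcases hab.lt_or_eq with hlt | rfl
  · exact (append_lt_append hl hlt x x).le
  · exact le_rfl

theorem append_lt_same (a : List Bool) {x y : Bool} (hxy : x < y) : a ++ [x] < a ++ [y] :=
  List.Lex.append_left _ (List.Lex.rel hxy) a

theorem profileOf_length {p : ℕ → Q} {i : ℕ} : (A.profileOf p i).length = i + 1 := by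
  simp [profileOf]

theorem profileOf_getElem {p : ℕ → Q} {i j : ℕ} (hj : j < (A.profileOf p i).length) :
    (A.profileOf p i)[j] = A.acc (p j) := by
  simp [profileOf]

theorem profileOf_succ {p : ℕ → Q} {i : ℕ} :
    A.profileOf p (i + 1) = A.profileOf p i ++ [A.acc (p (i + 1))] := by
  simp [profileOf, List.range_succ]

theorem profileOf_take {p : ℕ → Q} {i j : ℕ} (hj : j ≤ i) :
    (A.profileOf p i).take (j + 1) = A.profileOf p j := by
  unfold profileOf
  rw [← List.map_take, List.take_range]
  congr 2
  omega

theorem profileOf_congr {p q : ℕ → Q} {i : ℕ} (hpq : ∀ j ≤ i, p j = q j) :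
    A.profileOf p i = A.profileOf q i := by
  unfold profileOf
  apply List.map_congr_left
  intro j hj
  rw [hpq j (by simpa [Nat.lt_succ_iff] using List.mem_range.mp hj)]

theorem inDag_iff {v : Q × ℕ} : A.InDag w v ↔ ∃ p, A.FinRunTo w p v := Iff.rfl

theorem FinRunTo.restrict {p : ℕ → Q} {v : Q × ℕ} (hp : A.FinRunTo w p v) {j : ℕ}
    (hj : j ≤ v.2) : A.FinRunTo w p (p j, j) :=
  ⟨hp.1, fun i hi => hp.2.1 i (lt_of_lt_of_le hi hj), rfl⟩

theorem FinRunTo.extend {p : ℕ → Q} {u v : Q × ℕ} (hp : A.FinRunTo w p u)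
    (e : v.2 = u.2 + 1) (ht : v.1 ∈ A.trans u.1 (w u.2)) :
    ∃ q, A.FinRunTo w q v ∧ A.profileOf q v.2 = A.profileOf p u.2 ++ [A.acc v.1] ∧
      ∀ j ≤ u.2, q j = p j := by
  refine ⟨fun j => if j ≤ u.2 then p j else v.1, ⟨?_, ?_, ?_⟩, ?_, fun j hj => if_pos hj⟩
  · simpa using hp.1
  · intro j hj
    dsimp only
    rw [e] at hj
    rcases Nat.lt_succ_iff_lt_or_eq.mp hj with hj' | rfl
    · rw [if_pos (Nat.le_of_lt hj'), if_pos (show j + 1 ≤ u.2 from hj')]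
      exact hp.2.1 j hj'
    · rw [if_pos (le_refl _), if_neg (by omega), hp.2.2]
      exact ht
  · dsimp only
    rw [e, if_neg (by omega)]
  · rw [e, profileOf_succ, if_neg (by omega)]
    congr 1
    exact profileOf_congr fun j hj => by rw [if_pos hj]

theorem Edge.inDag_left {u v : Q × ℕ} (e : A.Edge w u v) : A.InDag w u := e.1

theorem Edge.inDag_right {u v : Q × ℕ} (e : A.Edge w u v) : A.InDag w v := by
  obtain ⟨p, hp⟩ := e.1
  obtain ⟨q, hq, -, -⟩ := FinRunTo.extend hp e.2.1 e.2.2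
  exact ⟨q, hq⟩

theorem Edge'.edge {u v : Q × ℕ} (e : A.Edge' w h u v) : A.Edge w u v := e.1

end NBW
namespace NBW

variable {Q σ : Type} {A : NBW Q σ} {w : ℕ → σ} {h : Q × ℕ → List Bool}

theorem le_h (hprof : A.IsProfileFun w h) {p : ℕ → Q} {v : Q × ℕ}
    (hp : A.FinRunTo w p v) : A.profileOf p v.2 ≤ h v :=
  profLe_iff.mp ((hprof v ⟨p, hp.1, hp.2.1, hp.2.2⟩).2 p hp)

theorem h_length (hprof : A.IsProfileFun w h) {v : Q × ℕ} (hv : A.InDag w v) :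
    (h v).length = v.2 + 1 := by
  obtain ⟨p, hp, he⟩ := (hprof v hv).1
  rw [← he, profileOf_length]

theorem h_last (hprof : A.IsProfileFun w h) {v : Q × ℕ} (hv : A.InDag w v)
    (hlt : v.2 < (h v).length) : (h v)[v.2] = A.acc v.1 := by
  obtain ⟨p, hp, he⟩ := (hprof v hv).1
  have : (h v)[v.2] = (A.profileOf p v.2)[v.2]'(by rw [he]; exact hlt) := by
    congr 1; exact he.symm
  rw [this, profileOf_getElem, hp.2.2]

theorem h_last' (hprof : A.IsProfileFun w h) {v : Q × ℕ} (hv : A.InDag w v)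
    {i : ℕ} (hi : v.2 = i) (hlt : i < (h v).length) : (h v)[i] = A.acc v.1 := by
  subst hi
  exact h_last hprof hv hlt

theorem h_level0 (hprof : A.IsProfileFun w h) {v : Q × ℕ} (hv : A.InDag w v)
    (h0 : v.2 = 0) : h v = [A.acc v.1] := by
  obtain ⟨p, hp, he⟩ := (hprof v hv).1
  have hp0 : p 0 = v.1 := by rw [← h0]; exact hp.2.2
  rw [← he, h0]
  simp [profileOf, List.range_succ, hp0]

theorem edge_h_le (hprof : A.IsProfileFun w h) {u v : Q × ℕ} (e : A.Edge w u v) :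
    h u ++ [A.acc v.1] ≤ h v := by
  obtain ⟨p, hp, he⟩ := (hprof u e.1).1
  obtain ⟨q, hq, hqe, -⟩ := hp.extend e.2.1 e.2.2
  calc h u ++ [A.acc v.1] = A.profileOf q v.2 := by rw [hqe, he]
    _ ≤ h v := le_h hprof hq

theorem edge'_h_ge (hprof : A.IsProfileFun w h) {u v : Q × ℕ} (e : A.Edge' w h u v) :
    h v ≤ h u ++ [A.acc v.1] := by
  obtain ⟨p, hp, he⟩ := (hprof v e.1.inDag_right).1
  have hv2 : v.2 = u.2 + 1 := e.1.2.1
  have hres : A.FinRunTo w p (p u.2, u.2) := hp.restrict (by omega)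
  have hresd : A.InDag w (p u.2, u.2) := ⟨p, hres.1, hres.2.1, hres.2.2⟩
  have hedge0 : A.Edge w (p u.2, u.2) v := by
    refine ⟨hresd, by rw [hv2], ?_⟩
    have := hp.2.1 u.2 (by omega)
    rw [show u.2 + 1 = v.2 by omega, hp.2.2] at this
    exact this
  have h1 : A.profileOf p u.2 ≤ h (p u.2, u.2) := le_h hprof hres
  have h2 : h (p u.2, u.2) ≤ h u := not_lt.mp (e.2 _ hedge0)
  have hstep : A.profileOf p v.2 = A.profileOf p u.2 ++ [A.acc v.1] := by
    rw [hv2, profileOf_succ]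
    congr 2
    rw [show u.2 + 1 = v.2 by omega, hp.2.2]
  calc h v = A.profileOf p v.2 := he.symm
    _ = A.profileOf p u.2 ++ [A.acc v.1] := hstep
    _ ≤ h (p u.2, u.2) ++ [A.acc v.1] := by
        refine append_le_append ?_ h1 _
        rw [profileOf_length, h_length hprof hresd]
    _ ≤ h u ++ [A.acc v.1] := by
        refine append_le_append ?_ h2 _
        rw [h_length hprof hresd, h_length hprof e.1.1]

theorem edge'_h (hprof : A.IsProfileFun w h) {u v : Q × ℕ} (e : A.Edge' w h u v) :
    h v = h u ++ [A.acc v.1] :=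
  le_antisymm (edge'_h_ge hprof e) (edge_h_le hprof e.1)

theorem finite_level [Finite Q] (n : ℕ) : {v : Q × ℕ | v.2 = n}.Finite := by
  apply Set.Finite.subset (Set.finite_range fun q : Q => (q, n))
  rintro ⟨q, m⟩ hm
  exact ⟨q, by simp_all [Set.mem_setOf_eq]⟩

theorem exists_edge'_pred [Finite Q] {v : Q × ℕ} (hv : A.InDag w v) (hn : 0 < v.2) :
    ∃ u, A.Edge' w h u v := by
  have hpred : {u | A.Edge w u v}.Nonempty := by
    obtain ⟨p, hp⟩ : ∃ p, A.FinRunTo w p v := hv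
    refine ⟨(p (v.2 - 1), v.2 - 1), ?_⟩
    have hres := hp.restrict (j := v.2 - 1) (by omega)
    refine ⟨⟨p, hres.1, hres.2.1, hres.2.2⟩, by simp; omega, ?_⟩
    have := hp.2.1 (v.2 - 1) (by omega)
    rw [show v.2 - 1 + 1 = v.2 by omega, hp.2.2] at this
    exact this
  have hfin : {u | A.Edge w u v}.Finite :=
    (finite_level (v.2 - 1)).subset fun u hu => by
      have := hu.2.1; simp only [Set.mem_setOf_eq]; omega
  obtain ⟨u, hu, hmax⟩ := Set.exists_max_image _ h hfin hpred
  exact ⟨u, hu, fun u' hu' => not_lt.mpr (hmax u' hu')⟩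

theorem exists_rootPath [Finite Q] (hprof : A.IsProfileFun w h) :
    ∀ n (v : Q × ℕ), A.InDag w v → v.2 = n →
    ∃ p : ℕ → Q × ℕ, p v.2 = v ∧ (∀ i, i < v.2 → A.Edge' w h (p i) (p (i+1))) ∧
      ∀ i ≤ v.2, A.InDag w (p i) ∧ (p i).2 = i ∧ h (p i) = (h v).take (i + 1) := by
  intro n
  induction n with
  | zero =>
    intro v hv h0
    refine ⟨fun _ => v, rfl, by omega, ?_⟩
    intro i hi
    rw [h0] at hi
    interval_cases i
    refine ⟨hv, h0, ?_⟩
    rw [List.take_of_length_le (by rw [h_length hprof hv]; omega)]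
  | succ n ih =>
    intro v hv hs
    obtain ⟨u, hu⟩ := exists_edge'_pred (h := h) hv (by omega)
    have hu2 : u.2 = n := by have := hu.1.2.1; omega
    obtain ⟨q, hq0, hqe, hqp⟩ := ih u hu.1.1 hu2
    have hhv : h v = h u ++ [A.acc v.1] := edge'_h hprof hu
    refine ⟨fun i => if i ≤ n then q i else v, ?_, ?_, ?_⟩
    · dsimp only
      rw [hs, if_neg (by omega)]
    · intro i hi
      rw [hs] at hi
      dsimp only
      rcases Nat.lt_succ_iff_lt_or_eq.mp hi with hi' | hieq
      · rw [if_pos (by omega), if_pos (by omega)]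
        exact hqe i (by omega)
      · rw [if_pos (le_of_eq hieq), if_neg (by omega)]
        have hqn : q i = u := by rw [hieq, ← hu2, hq0]
        rw [hqn]
        exact hu
    · intro i hi
      rw [hs] at hi
      dsimp only
      rcases lt_or_eq_of_le hi with hi' | hieq
      · rw [if_pos (by omega)]
        obtain ⟨d1, d2, d3⟩ := hqp i (by omega)
        refine ⟨d1, d2, ?_⟩
        rw [d3, hhv, List.take_append_of_le_length
          (by rw [h_length hprof hu.1.1]; omega)]
      · rw [if_neg (by omega)]
        refine ⟨hv, by omega, ?_⟩
        rw [List.take_of_length_le (by rw [h_length hprof hv]; omega)]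

end NBW
namespace NBW

variable {Q σ : Type} {A : NBW Q σ} {w : ℕ → σ} {h : Q × ℕ → List Bool}

theorem not_finite_mono {a u : Q × ℕ} (hr : Relation.ReflTransGen (A.Edge' w h) a u)
    (hu : ¬ A.FiniteIn' w h u) : ¬ A.FiniteIn' w h a := fun hfa =>
  hu (hfa.subset fun _ hx => hr.trans hx)

theorem exists_infinite_succ [Finite Q] {v : Q × ℕ} (hv : ¬ A.FiniteIn' w h v) :
    ∃ s, A.Edge' w h v s ∧ ¬ A.FiniteIn' w h s := by
  by_contra hno
  push_neg at hno
  apply hv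
  have hsub : {x | Relation.ReflTransGen (A.Edge' w h) v x} ⊆
      {v} ∪ ⋃ s ∈ {s | A.Edge' w h v s}, {x | Relation.ReflTransGen (A.Edge' w h) s x} := by
    intro x hx
    rcases Relation.ReflTransGen.cases_head hx with heq | ⟨s, hs, hsx⟩
    · exact Or.inl (by simp [heq.symm])
    · exact Or.inr (Set.mem_biUnion hs hsx)
  apply Set.Finite.subset _ hsub
  apply (Set.finite_singleton v).union
  apply Set.Finite.biUnion
  · exact (finite_level (v.2 + 1)).subset fun s hs => hs.1.2.1
  · intro s hs
    exact hno s hs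

theorem rtg_of_path {p : ℕ → Q × ℕ} {m : ℕ}
    (hp : ∀ i, i < m → A.Edge' w h (p i) (p (i + 1)))
    {a b : ℕ} (hab : a ≤ b) (hbm : b ≤ m) :
    Relation.ReflTransGen (A.Edge' w h) (p a) (p b) := by
  revert hbm
  induction b, hab using Nat.le_induction with
  | base => intro _; exact Relation.ReflTransGen.refl
  | succ b hab ih =>
    intro hbm
    exact (ih (by omega)).tail (hp b (by omega))

theorem path_not_finite {x : ℕ → Q × ℕ} (hlev : ∀ n, (x n).2 = n)
    (hx : ∀ n, A.Edge' w h (x n) (x (n + 1))) (j : ℕ) : ¬ A.FiniteIn' w h (x j) := by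
  intro hf
  refine Set.infinite_of_injective_forall_mem (f := fun d : ℕ => x (j + d)) ?_ ?_ hf
  · intro d1 d2 hd
    have h2 := congrArg Prod.snd hd
    rw [hlev, hlev] at h2
    omega
  · intro d
    exact rtg_of_path (m := j + d) (fun i _ => hx i) (by omega) (le_refl _)

theorem pigeon {α : Type*} {s : Set α} (hs : s.Finite) (f : ℕ → α) (hf : ∀ k, f k ∈ s) :
    ∃ a, a ∈ s ∧ ∀ N, ∃ k, N ≤ k ∧ f k = a := by
  by_contra hno
  push_neg at hno
  choose! N hN using hno
  obtain ⟨M, hM⟩ := (hs.image N).bddAbove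
  have h1 : N (f (M + 1)) ≤ M := hM (Set.mem_image_of_mem N (hf (M + 1)))
  exact hN (f (M + 1)) (hf (M + 1)) (M + 1) (by omega) rfl

theorem koenig {α : Type*} (W : ℕ → Set α) (R : α → α → Prop)
    (hfin : ∀ n, (W n).Finite) (hne : ∀ n, (W n).Nonempty)
    (hdisj : ∀ m n x, x ∈ W m → x ∈ W n → m = n)
    (hback : ∀ n v, v ∈ W (n + 1) → ∃ u, u ∈ W n ∧ R u v) :
    ∃ x : ℕ → α, (∀ n, x n ∈ W n) ∧ ∀ n, R (x n) (x (n + 1)) := by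
  classical
  set Step : α → α → Prop := fun u v => R u v ∧ ∃ n, u ∈ W n ∧ v ∈ W (n + 1) with hStep
  have hchain : ∀ d n v, v ∈ W (n + d) → ∃ u, u ∈ W n ∧ Relation.ReflTransGen Step u v := by
    intro d
    induction d with
    | zero => intro n v hv; exact ⟨v, hv, Relation.ReflTransGen.refl⟩
    | succ d ih =>
      intro n v hv
      rw [show n + (d + 1) = (n + d) + 1 by omega] at hv
      obtain ⟨u', hu', hru'⟩ := hback (n + d) v hv
      obtain ⟨u, hu, hc⟩ := ih n u' hu'
      exact ⟨u, hu, hc.tail ⟨hru', n + d, hu', hv⟩⟩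
  set alive : α → Prop :=
    fun u => ∀ N, ∃ m, N ≤ m ∧ ∃ v, v ∈ W m ∧ Relation.ReflTransGen Step u v with halivedef
  have hroot : ∃ u, u ∈ W 0 ∧ alive u := by
    choose vm hvm using hne
    have hsel : ∀ m, ∃ u, u ∈ W 0 ∧ Relation.ReflTransGen Step u (vm m) := fun m =>
      hchain m 0 (vm m) (by simpa using hvm m)
    choose um hum hcm using hsel
    obtain ⟨a, ha, hrec⟩ := pigeon (hfin 0) um hum
    refine ⟨a, ha, fun N => ?_⟩
    obtain ⟨k, hk, hke⟩ := hrec N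
    exact ⟨k, hk, vm k, hvm k, hke ▸ hcm k⟩
  have hstepx : ∀ n u, u ∈ W n → alive u → ∃ s, s ∈ W (n + 1) ∧ Step u s ∧ alive s := by
    intro n u hu halive
    have hsucc : ∀ k : ℕ, ∃ s, s ∈ {s | Step u s} ∧
        ∃ m, k ≤ m ∧ ∃ v, v ∈ W m ∧ Relation.ReflTransGen Step s v := by
      intro k
      obtain ⟨m, hm, v, hv, hc⟩ := halive (max k (n + 1))
      rcases hc.cases_head with heq | ⟨s, hs, hsv⟩
      · exfalso
        have := hdisj n m u hu (heq ▸ hv)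
        omega
      · exact ⟨s, hs, m, by omega, v, hv, hsv⟩
    choose sk hsk hmk using hsucc
    have hsub : {s | Step u s} ⊆ W (n + 1) := by
      rintro s ⟨-, n', hn', hs'⟩
      rwa [hdisj n' n u hn' hu] at hs'
    obtain ⟨s, hs, hrec⟩ := pigeon ((hfin (n + 1)).subset hsub) sk hsk
    refine ⟨s, hsub hs, hs, fun N => ?_⟩
    obtain ⟨k, hk, hke⟩ := hrec N
    obtain ⟨m, hm, v, hv, hc⟩ := hmk k
    exact ⟨m, by omega, v, hv, hke ▸ hc⟩
  obtain ⟨a0, ha0, halive0⟩ := hroot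
  let F : ∀ n : ℕ, {u : α // u ∈ W n ∧ alive u} := fun n =>
    Nat.rec ⟨a0, ha0, halive0⟩
      (fun n prev =>
        ⟨Classical.choose (hstepx n prev.1 prev.2.1 prev.2.2),
          (Classical.choose_spec (hstepx n prev.1 prev.2.1 prev.2.2)).1,
          (Classical.choose_spec (hstepx n prev.1 prev.2.1 prev.2.2)).2.2⟩) n
  refine ⟨fun n => (F n).1, fun n => (F n).2.1, fun n => ?_⟩
  exact (Classical.choose_spec (hstepx n (F n).1 (F n).2.1 (F n).2.2)).2.1.1

end NBW
namespace NBW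

variable {Q σ : Type} {A : NBW Q σ} {w : ℕ → σ} {h : Q × ℕ → List Bool}

/-- The canonical retrospective labeling `λ^k`. -/
def lamK (h : Q × ℕ → List Bool) (k : ℕ) : Q × ℕ → Bool :=
  fun v => ((h v).drop (k + 1)).all (fun b => !b)

theorem lamK_retro [Finite Q] (hprof : A.IsProfileFun w h) (k : ℕ) :
    A.IsRetroLabeling w h k (lamK h k) := by
  refine ⟨?_, ?_, ?_⟩
  · intro u hu hk
    have hlen := h_length hprof hu
    unfold lamK
    rw [List.drop_eq_nil_of_le (by omega)]
    rfl
  · intro u hu hk hacc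
    have hlen := h_length hprof hu
    unfold lamK
    refine List.all_eq_false.mpr ⟨true, ?_, by simp⟩
    rw [List.mem_iff_getElem]
    refine ⟨u.2 - (k + 1), by rw [List.length_drop, hlen]; omega, ?_⟩
    rw [List.getElem_drop]
    have hidx : k + 1 + (u.2 - (k + 1)) = u.2 := by omega
    simp only [hidx]
    rw [h_last hprof hu (by omega), hacc]
  · intro u v hk hacc he
    have hhv : h v = h u ++ [A.acc v.1] := edge'_h hprof he
    have hlenu := h_length hprof he.1.1
    have hv2 : v.2 = u.2 + 1 := he.1.2.1
    unfold lamK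
    rw [hhv, List.drop_append_of_le_length (by omega), List.all_append, hacc]
    simp

theorem lamK_false_elim (hl : lamK h k u = false) :
    ∃ j, k < j ∧ ∃ hj : j < (h u).length, (h u)[j] = true := by
  obtain ⟨x, hx, hxt⟩ := List.all_eq_false.mp hl
  have hxtrue : x = true := by revert hxt; cases x <;> simp
  subst hxtrue
  obtain ⟨i, hi, hig⟩ := List.mem_iff_getElem.mp hx
  rw [List.getElem_drop] at hig
  have hlen : k + 1 + i < (h u).length := by
    rw [List.length_drop] at hi; omega
  exact ⟨k + 1 + i, by omega, hlen, hig⟩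

theorem exists_infinite_F [Finite Q] (hprof : A.IsProfileFun w h) {u : Q × ℕ}
    (hu : A.InDag w u) (hinf : ¬ A.FiniteIn' w h u) {j : ℕ}
    (hj1 : j < (h u).length) (hjt : (h u)[j] = true) :
    ∃ a, A.InDag w a ∧ a.2 = j ∧ ¬ A.FiniteIn' w h a ∧ A.acc a.1 = true := by
  have hlen := h_length hprof hu
  obtain ⟨p, hpu, hpe, hpp⟩ := exists_rootPath hprof u.2 u hu rfl
  obtain ⟨hInd, hlev, hh⟩ := hpp j (by omega)
  refine ⟨p j, hInd, hlev, ?_, ?_⟩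
  · apply not_finite_mono _ hinf
    have := rtg_of_path hpe (a := j) (b := u.2) (by omega) (le_refl _)
    rwa [hpu] at this
  · have hlast := h_last' hprof hInd hlev
      (by rw [h_length hprof hInd, hlev]; omega)
    rw [← hlast, List.getElem_of_eq hh, List.getElem_take]
    exact hjt

theorem inDag_level0_init {v : Q × ℕ} (hv : A.InDag w v) (h0 : v.2 = 0) :
    v.1 ∈ A.init := by
  obtain ⟨p, h1, h2, h3⟩ := hv
  rw [h0] at h3
  rw [← h3]
  exact h1

theorem path_levels {E : Q × ℕ → Q × ℕ → Prop} {ρ : ℕ → Q × ℕ}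
    (hle : ∀ a b, E a b → A.Edge w a b) (hρ : A.IsPath E ρ) (i : ℕ) : (ρ i).2 = i := by
  induction i with
  | zero => exact hρ.2.1
  | succ i ih => rw [(hle _ _ (hρ.2.2 i)).2.1, ih]

theorem path_inDag {E : Q × ℕ → Q × ℕ → Prop} {ρ : ℕ → Q × ℕ}
    (hle : ∀ a b, E a b → A.Edge w a b) (hρ : A.IsPath E ρ) (i : ℕ) : A.InDag w (ρ i) := by
  induction i with
  | zero =>
    refine ⟨fun _ => (ρ 0).1, hρ.1, ?_, ?_⟩
    · intro j hj
      rw [hρ.2.1] at hj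
      omega
    · rfl
  | succ i ih => exact (hle _ _ (hρ.2.2 i)).inDag_right

end NBW
namespace NBW

open Classical

variable {Q σ : Type} {A : NBW Q σ} {w : ℕ → σ} {h : Q × ℕ → List Bool}

/-- The acceptance profile of the first `n` nodes of a path. -/
def PProf (A : NBW Q σ) (ρ : ℕ → Q × ℕ) (n : ℕ) : List Bool :=
  (List.range n).map fun i => A.acc (ρ i).1

/-- `s` is extendable to the profile of an accepting path. -/
def GoodP (A : NBW Q σ) (w : ℕ → σ) (s : List Bool) : Prop :=
  ∃ ρ, A.AcceptingPath (A.Edge w) ρ ∧ PProf A ρ s.length = s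

/-- The greedy lexicographically maximal accepting-profile prefix sequence. -/
noncomputable def BP (A : NBW Q σ) (w : ℕ → σ) : ℕ → List Bool :=
  fun n => Nat.rec [] (fun _ prev => prev ++ [decide (GoodP A w (prev ++ [true]))]) n

theorem BP_succ (n : ℕ) :
    BP A w (n + 1) = BP A w n ++ [decide (GoodP A w (BP A w n ++ [true]))] := rfl

theorem BP_length (n : ℕ) : (BP A w n).length = n := by
  induction n with
  | zero => rfl
  | succ n ih => rw [BP_succ, List.length_append, ih]; rfl

theorem PProf_length {ρ : ℕ → Q × ℕ} (n : ℕ) : (PProf A ρ n).length = n := by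
  simp [PProf]

theorem PProf_succ {ρ : ℕ → Q × ℕ} (n : ℕ) :
    PProf A ρ (n + 1) = PProf A ρ n ++ [A.acc (ρ n).1] := by
  simp [PProf, List.range_succ]

theorem PProf_take {ρ : ℕ → Q × ℕ} {m n : ℕ} (hmn : m ≤ n) :
    (PProf A ρ n).take m = PProf A ρ m := by
  unfold PProf
  rw [← List.map_take, List.take_range]
  congr 2
  omega

theorem BP_take {m n : ℕ} (hmn : m ≤ n) : (BP A w n).take m = BP A w m := by
  induction n with
  | zero =>
    have : m = 0 := by omega
    subst this
    rfl
  | succ n ih =>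
    rcases lt_or_eq_of_le hmn with hlt | heq
    · rw [BP_succ, List.take_append_of_le_length (by rw [BP_length]; omega)]
      exact ih (by omega)
    · subst heq
      exact List.take_of_length_le (by rw [BP_length])

theorem BP_good (hex : ∃ ρ, A.AcceptingPath (A.Edge w) ρ) (n : ℕ) :
    GoodP A w (BP A w n) := by
  induction n with
  | zero =>
    obtain ⟨ρ, hρ⟩ := hex
    exact ⟨ρ, hρ, rfl⟩
  | succ n ih =>
    obtain ⟨ρ, hρ, hpe⟩ := ih
    rw [BP_length] at hpe
    by_cases hg : GoodP A w (BP A w n ++ [true])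
    · rw [BP_succ, decide_eq_true hg]
      exact hg
    · have hc : A.acc (ρ n).1 = false := by
        by_contra hct
        apply hg
        refine ⟨ρ, hρ, ?_⟩
        have hl : (BP A w n ++ [true]).length = n + 1 := by simp [BP_length]
        rw [hl, PProf_succ, hpe]
        have hct' : A.acc (ρ n).1 = true := by simpa using hct
        rw [hct']
      refine ⟨ρ, hρ, ?_⟩
      rw [BP_succ, decide_eq_false hg]
      have hl : (BP A w n ++ [false]).length = n + 1 := by simp [BP_length]
      rw [hl, PProf_succ, hpe, hc]

theorem PProf_le_BP {ρ : ℕ → Q × ℕ} (hρ : A.AcceptingPath (A.Edge w) ρ) (n : ℕ) :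
    PProf A ρ n ≤ BP A w n := by
  induction n with
  | zero =>
    have h1 : PProf A ρ 0 = [] := by simp [PProf]
    have h2 : BP A w 0 = [] := rfl
    rw [h1, h2]
  | succ n ih =>
    rw [PProf_succ, BP_succ]
    rcases ih.lt_or_eq with hlt | heq
    · exact (append_lt_append (by rw [PProf_length, BP_length]) hlt _ _).le
    · rw [heq]
      by_cases hg : GoodP A w (BP A w n ++ [true])
      · rw [decide_eq_true hg]
        cases hb : A.acc (ρ n).1
        · exact (append_lt_same _ (by simp)).le
        · exact le_rfl
      · have hb : A.acc (ρ n).1 = false := by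
          by_contra hbt
          apply hg
          refine ⟨ρ, hρ, ?_⟩
          have hbt' : A.acc (ρ n).1 = true := by simpa using hbt
          have hl : (BP A w n ++ [true]).length = n + 1 := by simp [BP_length]
          rw [hl, PProf_succ, heq, hbt']
        rw [decide_eq_false hg, hb]

theorem BP_ones (hex : ∃ ρ, A.AcceptingPath (A.Edge w) ρ) (N : ℕ) :
    ∃ j, N ≤ j ∧ GoodP A w (BP A w j ++ [true]) := by
  obtain ⟨ρ, hρ, hpe⟩ := BP_good hex N
  rw [BP_length] at hpe
  have hfind : ∃ j, N ≤ j ∧ A.acc (ρ j).1 = true := by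
    obtain ⟨i, hi, hacc⟩ := hρ.2 N
    exact ⟨i, hi, hacc⟩
  set j := Nat.find hfind with hjdef
  obtain ⟨hNj, haccj⟩ := Nat.find_spec hfind
  by_cases hmid : ∃ i, N ≤ i ∧ i < j ∧ GoodP A w (BP A w i ++ [true])
  · obtain ⟨i, h1, h2, h3⟩ := hmid
    exact ⟨i, h1, h3⟩
  · push_neg at hmid
    have hstep : ∀ d, N + d ≤ j → PProf A ρ (N + d) = BP A w (N + d) := by
      intro d
      induction d with
      | zero => intro _; exact hpe
      | succ d ih =>
        intro hd
        rw [show N + (d + 1) = (N + d) + 1 by omega, PProf_succ, BP_succ, ih (by omega)]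
        have hacc : A.acc (ρ (N + d)).1 = false := by
          by_contra hft
          exact Nat.find_min hfind (show N + d < j by omega)
            ⟨by omega, by simpa using hft⟩
        have hng : ¬ GoodP A w (BP A w (N + d) ++ [true]) := hmid (N + d) (by omega) (by omega)
        rw [hacc, decide_eq_false hng]
    have hj' : PProf A ρ j = BP A w j := by
      have := hstep (j - N) (by omega)
      rwa [show N + (j - N) = j by omega] at this
    refine ⟨j, hNj, ρ, hρ, ?_⟩
    have hl : (BP A w j ++ [true]).length = j + 1 := by simp [BP_length]
    rw [hl, PProf_succ, hj', haccj]

theorem BP_realized [Finite Q] (hprof : A.IsProfileFun w h)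
    (hex : ∃ ρ, A.AcceptingPath (A.Edge w) ρ) (n : ℕ) :
    ∃ v, A.InDag w v ∧ v.2 = n ∧ h v = BP A w (n + 1) := by
  obtain ⟨ρ, hρ, hpe⟩ := BP_good hex (n + 1)
  rw [BP_length] at hpe
  have hlev := path_levels (fun _ _ e => e) hρ.1
  have hind := path_inDag (fun _ _ e => e) hρ.1
  have hpref : ∀ m, m ≤ n + 1 → PProf A ρ m = BP A w m := by
    intro m hm
    have hcong := congrArg (List.take m) hpe
    rwa [PProf_take hm, BP_take hm] at hcong
  have hkey : ∀ m, m ≤ n → h (ρ m) = BP A w (m + 1) := by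
    intro m
    induction m with
    | zero =>
      intro _
      have h0 : h (ρ 0) = [A.acc (ρ 0).1] := h_level0 hprof (hind 0) (hlev 0)
      have h1 : PProf A ρ 1 = BP A w 1 := hpref 1 (by omega)
      rw [h0, ← h1]
      simp [PProf, List.range_succ]
    | succ m ih =>
      intro hm
      have hbm := ih (by omega)
      have e : A.Edge w (ρ m) (ρ (m + 1)) := hρ.1.2.2 m
      by_cases hE' : A.Edge' w h (ρ m) (ρ (m + 1))
      · have hstep := edge'_h hprof hE'
        rw [hstep, hbm]
        have h1 : PProf A ρ (m + 2) = BP A w (m + 2) := hpref (m + 2) (by omega)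
        rw [PProf_succ, BP_succ] at h1
        have h2 : PProf A ρ (m + 1) = BP A w (m + 1) := hpref (m + 1) (by omega)
        rw [h2] at h1
        have h3 := List.append_cancel_left h1
        conv_rhs => rw [BP_succ (m + 1)]
        rw [h3]
      · exfalso
        have hE'' : ∃ u', A.Edge w u' (ρ (m + 1)) ∧ ProfLt (h (ρ m)) (h u') := by
          by_contra hno
          push_neg at hno
          exact hE' ⟨e, fun u' he' => hno u' he'⟩
        obtain ⟨u', he', hlt'⟩ := hE''
        have hu'lev : u'.2 = m := by
          have h4 := he'.2.1
          rw [hlev (m + 1)] at h4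
          omega
        obtain ⟨p', hp'u, hp'e, hp'p⟩ := exists_rootPath hprof u'.2 u' he'.1 rfl
        rw [hu'lev] at hp'u hp'e hp'p
        have hρ'path : A.IsPath (A.Edge w) (fun i => if i ≤ m then p' i else ρ i) := by
          refine ⟨?_, ?_, ?_⟩
          · dsimp only
            rw [if_pos (by omega)]
            exact inDag_level0_init (hp'p 0 (by omega)).1 (hp'p 0 (by omega)).2.1
          · dsimp only
            rw [if_pos (by omega)]
            exact (hp'p 0 (by omega)).2.1
          · intro i
            dsimp only
            rcases lt_trichotomy i m with hi | hieq | hi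
            · rw [if_pos (by omega), if_pos (by omega)]
              exact (hp'e i (by omega)).1
            · subst hieq
              rw [if_pos (le_refl _), if_neg (by omega), hp'u]
              exact he'
            · rw [if_neg (by omega), if_neg (by omega)]
              exact hρ.1.2.2 i
        have hρ'acc : A.AcceptingPath (A.Edge w) (fun i => if i ≤ m then p' i else ρ i) := by
          refine ⟨hρ'path, fun N => ?_⟩
          obtain ⟨i, hi, hacci⟩ := hρ.2 (max N (m + 1))
          refine ⟨i, by omega, ?_⟩
          dsimp only
          rw [if_neg (by omega)]
          exact hacci
        have hval : PProf A (fun i => if i ≤ m then p' i else ρ i) (m + 1) = h u' := by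
          apply List.ext_getElem
          · rw [PProf_length, h_length hprof he'.1, hu'lev]
          · intro i h1 h2
            rw [PProf_length] at h1
            have hgi : (PProf A (fun i => if i ≤ m then p' i else ρ i) (m + 1))[i]'(by rw [PProf_length]; omega)
                = A.acc ((fun i => if i ≤ m then p' i else ρ i) i).1 := by
              simp [PProf]
            rw [hgi]
            dsimp only
            rw [if_pos (by omega)]
            obtain ⟨hi1, hi2, hi3⟩ := hp'p i (by omega)
            have hlast := h_last' hprof hi1 hi2
              (by rw [h_length hprof hi1, hi2]; omega)
            rw [← hlast, List.getElem_of_eq hi3, List.getElem_take]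
        have hdom := PProf_le_BP hρ'acc (m + 1)
        rw [hval, ← hbm] at hdom
        exact absurd (profLt_iff.mp hlt') (not_lt.mpr hdom)
  exact ⟨ρ n, hind n, hlev n, hkey n (le_refl _)⟩

theorem legal_to_rejecting [Finite Q] (hprof : A.IsProfileFun w h) {k : ℕ}
    {lam : Q × ℕ → Bool} (hretro : A.IsRetroLabeling w h k lam)
    (hlegal : A.Legal w h lam) : ¬ ∃ ρ, A.AcceptingPath (A.Edge w) ρ := by
  intro hex
  obtain ⟨x, hxW, hxE⟩ := koenig
    (fun n => {v : Q × ℕ | A.InDag w v ∧ v.2 = n ∧ h v = BP A w (n + 1)})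
    (A.Edge' w h)
    (fun n => (finite_level n).subset fun v hv => hv.2.1)
    (fun n => (BP_realized hprof hex n).imp fun v hv => hv)
    (fun m n v hvm hvn => by rw [← hvm.2.1, hvn.2.1])
    (by
      intro n v hv
      obtain ⟨u, hu⟩ := exists_edge'_pred (h := h) hv.1 (by rw [hv.2.1]; omega)
      have hustep := edge'_h hprof hu
      have hulen : u.2 = n := by
        have := hu.1.2.1
        rw [hv.2.1] at this
        omega
      have hBP : h u ++ [A.acc v.1] = BP A w (n + 1) ++
          [decide (GoodP A w (BP A w (n + 1) ++ [true]))] := by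
        rw [← hustep, ← BP_succ, hv.2.2]
      have := (List.append_inj hBP
        (by rw [h_length hprof hu.1.1, hulen, BP_length])).1
      exact ⟨u, ⟨hu.1.1, hulen, this⟩, hu⟩)
  have hlev : ∀ n, (x n).2 = n := fun n => (hxW n).2.1
  obtain ⟨j, hj, hgood⟩ := BP_ones hex (k + 1)
  have hbp : BP A w (j + 1) = BP A w j ++ [true] := by
    rw [BP_succ, decide_eq_true hgood]
  have hacc : A.acc (x j).1 = true := by
    have hlen : j < (h (x j)).length := by
      rw [h_length hprof (hxW j).1, hlev j]
      omega
    have hlast := h_last' hprof (hxW j).1 (hlev j) hlen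
    rw [← hlast, List.getElem_of_eq ((hxW j).2.2.trans hbp)]
    exact List.getElem_concat_length (by rw [BP_length]) _
  have hfalse : lam (x j) = false := hretro.2.1 (x j) (hxW j).1
    (by rw [hlev j]; omega) hacc
  exact path_not_finite hlev hxE j (hlegal (x j) (hxW j).1 hfalse)

end NBW
namespace NBW

open Classical

variable {Q σ : Type} {A : NBW Q σ} {w : ℕ → σ} {h : Q × ℕ → List Bool}

/-- Profiles of nodes that are infinite in `G'`. -/
def SP (A : NBW Q σ) (w : ℕ → σ) (h : Q × ℕ → List Bool) (n : ℕ) : Set (List Bool) :=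
  {s | ∃ v, A.InDag w v ∧ ¬ A.FiniteIn' w h v ∧ v.2 = n ∧ h v = s}

theorem SP_len (hprof : A.IsProfileFun w h) {n : ℕ} {s : List Bool}
    (hs : s ∈ SP A w h n) : s.length = n + 1 := by
  obtain ⟨v, h1, h2, h3, h4⟩ := hs
  rw [← h4, h_length hprof h1, h3]

theorem SP_fin [Finite Q] (n : ℕ) : (SP A w h n).Finite := by
  apply Set.Finite.subset ((finite_level (Q := Q) n).image h)
  rintro s ⟨v, h1, h2, h3, h4⟩
  exact ⟨v, h3, h4⟩

theorem SP_take [Finite Q] (hprof : A.IsProfileFun w h) {n : ℕ} {s : List Bool}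
    (hs : s ∈ SP A w h n) {i : ℕ} (hi : i ≤ n) : s.take (i + 1) ∈ SP A w h i := by
  obtain ⟨v, h1, h2, h3, h4⟩ := hs
  obtain ⟨p, hpu, hpe, hpp⟩ := exists_rootPath hprof v.2 v h1 rfl
  obtain ⟨d1, d2, d3⟩ := hpp i (by omega)
  refine ⟨p i, d1, ?_, d2, by rw [d3, h4]⟩
  apply not_finite_mono _ h2
  have := rtg_of_path hpe (a := i) (b := v.2) (by omega) (le_refl _)
  rwa [hpu] at this

theorem SP_ext [Finite Q] (hprof : A.IsProfileFun w h) {n : ℕ} {s : List Bool}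
    (hs : s ∈ SP A w h n) : ∃ b, s ++ [b] ∈ SP A w h (n + 1) := by
  obtain ⟨v, h1, h2, h3, h4⟩ := hs
  obtain ⟨s', he, hinf⟩ := exists_infinite_succ h2
  refine ⟨A.acc s'.1, s', he.edge.inDag_right, hinf, by rw [he.edge.2.1, h3], ?_⟩
  rw [edge'_h hprof he, h4]

theorem SP_drop [Finite Q] (hprof : A.IsProfileFun w h) {n : ℕ} {s : List Bool}
    (hs : s ∈ SP A w h (n + 1)) :
    s.dropLast ∈ SP A w h n ∧ ∃ b, s = s.dropLast ++ [b] := by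
  obtain ⟨v, h1, h2, h3, h4⟩ := hs
  obtain ⟨u, hu⟩ := exists_edge'_pred (h := h) h1 (by omega)
  have hstep := edge'_h hprof hu
  have hul : u.2 = n := by have := hu.1.2.1; omega
  have hdl : s.dropLast = h u := by rw [← h4, hstep, List.dropLast_concat]
  constructor
  · exact ⟨u, hu.1.1, not_finite_mono (Relation.ReflTransGen.single hu) h2, hul, hdl.symm⟩
  · exact ⟨A.acc v.1, by rw [hdl, ← hstep, h4]⟩

theorem SP_image [Finite Q] (hprof : A.IsProfileFun w h) (n : ℕ) :
    SP A w h n = List.dropLast '' SP A w h (n + 1) := by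
  ext s
  constructor
  · intro hs
    obtain ⟨b, hb⟩ := SP_ext hprof hs
    exact ⟨s ++ [b], hb, List.dropLast_concat⟩
  · rintro ⟨t, ht, rfl⟩
    exact (SP_drop hprof ht).1

end NBW
namespace NBW

open Classical

variable {Q σ : Type} {A : NBW Q σ} {w : ℕ → σ} {h : Q × ℕ → List Bool}

theorem rejecting_to_legal [Finite Q] (hprof : A.IsProfileFun w h)
    (hinfF : ∀ k, ∃ a, A.InDag w a ∧ k < a.2 ∧ ¬ A.FiniteIn' w h a ∧ A.acc a.1 = true) :
    ∃ ρ, A.AcceptingPath (A.Edge w) ρ := by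
  classical
  choose a ha1 ha2 ha3 ha4 using hinfF
  set c : ℕ → ℕ := fun n => (SP A w h n).ncard with hc
  have hmono : Monotone c := monotone_nat_of_le_succ (fun n => by
    show (SP A w h n).ncard ≤ (SP A w h (n + 1)).ncard
    rw [SP_image hprof n]
    exact Set.ncard_image_le (SP_fin (n + 1)))
  have hbound : ∀ n, c n ≤ Nat.card Q := by
    intro n
    have h1 : (SP A w h n).ncard ≤ ({v : Q × ℕ | v.2 = n}).ncard := by
      calc (SP A w h n).ncard ≤ (h '' {v : Q × ℕ | v.2 = n}).ncard :=
            Set.ncard_le_ncard (by rintro s ⟨v, _, _, h3, h4⟩; exact ⟨v, h3, h4⟩)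
              ((finite_level (Q := Q) n).image h)
        _ ≤ ({v : Q × ℕ | v.2 = n}).ncard := Set.ncard_image_le (finite_level n)
    have h2 : ({v : Q × ℕ | v.2 = n}).ncard ≤ (Set.univ : Set Q).ncard := by
      refine Set.ncard_le_ncard_of_injOn (fun v => v.1) (fun v _ => Set.mem_univ _) ?_
        Set.finite_univ
      intro u hu v hv huv
      have hu2 : u.2 = n := hu
      have hv2 : v.2 = n := hv
      exact Prod.ext huv (by rw [hu2, hv2])
    rw [Set.ncard_univ] at h2
    exact le_trans h1 h2
  have hbdd : BddAbove (Set.range c) := ⟨Nat.card Q, by rintro y ⟨n, rfl⟩; exact hbound n⟩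
  obtain ⟨L, hL⟩ := Nat.sSup_mem (Set.range_nonempty c) hbdd
  have hconst : ∀ n, L ≤ n → c n = c L := by
    intro n hn
    refine le_antisymm ?_ (hmono hn)
    rw [hL]
    exact le_csSup hbdd ⟨n, rfl⟩
  have huniq : ∀ n, L ≤ n → ∀ s t, s ∈ SP A w h (n + 1) → t ∈ SP A w h (n + 1) →
      s.dropLast = t.dropLast → s = t := by
    intro n hn s t hs ht hdl
    have hcard : (List.dropLast '' SP A w h (n + 1)).ncard = (SP A w h (n + 1)).ncard := by
      rw [← SP_image hprof n]
      show c n = c (n + 1)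
      rw [hconst n hn, hconst (n + 1) (by omega)]
    exact Set.injOn_of_ncard_image_eq hcard (SP_fin (n + 1)) hs ht hdl
  set f : ℕ → List Bool := fun k => (h (a (max k L))).take (L + 1) with hf
  have hfS : ∀ k, f k ∈ SP A w h L := by
    intro k
    have hmem : h (a (max k L)) ∈ SP A w h (a (max k L)).2 :=
      ⟨a (max k L), ha1 _, ha3 _, rfl, rfl⟩
    exact SP_take hprof hmem (by have := ha2 (max k L); omega)
  obtain ⟨t, htS, hthit⟩ := pigeon (SP_fin L) f hfS
  have htlen : t.length = L + 1 := SP_len hprof htS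
  let T : ∀ n : ℕ, {s : List Bool // s ∈ SP A w h n} := fun n =>
    Nat.rec (motive := fun n => {s : List Bool // s ∈ SP A w h n})
      ⟨t.take 1, SP_take hprof htS (Nat.zero_le _)⟩
      (fun n prev =>
        if hn : n + 1 ≤ L then ⟨t.take (n + 2), SP_take hprof htS hn⟩
        else ⟨prev.1 ++ [Classical.choose (SP_ext hprof prev.2)],
          Classical.choose_spec (SP_ext hprof prev.2)⟩) n
  have hTsucc : ∀ n, T (n + 1) =
      if hn : n + 1 ≤ L then ⟨t.take (n + 2), SP_take hprof htS hn⟩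
      else ⟨(T n).1 ++ [Classical.choose (SP_ext hprof (T n).2)],
        Classical.choose_spec (SP_ext hprof (T n).2)⟩ := fun n => rfl
  have hTle : ∀ n, n ≤ L → (T n).1 = t.take (n + 1) := by
    intro n hn
    cases n with
    | zero => rfl
    | succ n => rw [hTsucc n, dif_pos hn]
  have hTstep : ∀ n, ∃ b, (T (n + 1)).1 = (T n).1 ++ [b] := by
    intro n
    by_cases hn : n + 1 ≤ L
    · refine ⟨t[n + 1]'(by omega), ?_⟩
      have h1 : (T (n + 1)).1 = t.take (n + 2) := by rw [hTsucc n, dif_pos hn]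
      rw [h1, hTle n (by omega), List.take_succ,
        List.getElem?_eq_getElem (show n + 1 < t.length by omega)]
      simp
    · exact ⟨_, by rw [hTsucc n, dif_neg hn]⟩
  have hmatchall : ∀ k, f k = t → ∀ d, L + d ≤ (a (max k L)).2 →
      (T (L + d)).1 = (h (a (max k L))).take (L + d + 1) := by
    intro k hk d
    induction d with
    | zero =>
      intro _
      simp only [Nat.add_zero]
      rw [hTle L (le_refl _), List.take_of_length_le (by omega)]
      exact hk.symm
    | succ d ih =>
      intro hd
      show (T (L + d + 1)).1 = (h (a (max k L))).take (L + d + 1 + 1)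
      have hlen' : (h (a (max k L))).length = (a (max k L)).2 + 1 := h_length hprof (ha1 _)
      refine huniq (L + d) (by omega) _ _ (T (L + d + 1)).2 ?_ ?_
      · have hmem : h (a (max k L)) ∈ SP A w h (a (max k L)).2 :=
          ⟨a (max k L), ha1 _, ha3 _, rfl, rfl⟩
        exact SP_take hprof hmem (by omega)
      · obtain ⟨b, hb⟩ := hTstep (L + d)
        rw [hb, List.dropLast_concat]
        have htk : (h (a (max k L))).take (L + d + 1 + 1) =
            (h (a (max k L))).take (L + d + 1) ++
              [(h (a (max k L)))[L + d + 1]'(by omega)] := by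
          rw [List.take_succ, List.getElem?_eq_getElem (by omega)]
          simp
        rw [htk, List.dropLast_concat]
        exact ih (by omega)
  obtain ⟨x, hxW, hxE⟩ := koenig
    (fun n => {v : Q × ℕ | A.InDag w v ∧ ¬ A.FiniteIn' w h v ∧ v.2 = n ∧ h v = (T n).1})
    (A.Edge' w h)
    (fun n => (finite_level (Q := Q) n).subset fun v hv => hv.2.2.1)
    (fun n => by
      obtain ⟨v, h1, h2, h3, h4⟩ := (T n).2
      exact ⟨v, h1, h2, h3, h4⟩)
    (fun m n v hvm hvn => by rw [← hvm.2.2.1, hvn.2.2.1])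
    (by
      intro n v hv
      obtain ⟨u, hu⟩ := exists_edge'_pred (h := h) hv.1 (by rw [hv.2.2.1]; omega)
      have hstep := edge'_h hprof hu
      have hul : u.2 = n := by
        have := hu.1.2.1
        rw [hv.2.2.1] at this
        omega
      obtain ⟨b, hb⟩ := hTstep n
      have hT_eq : h u = (T n).1 := by
        have heq : h u ++ [A.acc v.1] = (T n).1 ++ [b] := by
          rw [← hstep, hv.2.2.2, hb]
        exact (List.append_inj heq
          (by rw [h_length hprof hu.1.1, hul, SP_len hprof (T n).2])).1
      exact ⟨u, ⟨hu.1.1, not_finite_mono (Relation.ReflTransGen.single hu) hv.2.1,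
        hul, hT_eq⟩, hu⟩)
  have hlev : ∀ n, (x n).2 = n := fun n => (hxW n).2.2.1
  refine ⟨x, ⟨inDag_level0_init (hxW 0).1 (hlev 0), hlev 0, fun i => (hxE i).1⟩, ?_⟩
  intro N
  obtain ⟨k, hkN, hk⟩ := hthit (max N L)
  have hmaxk : max k L = k := by omega
  have hkL : L ≤ k := le_trans (le_max_right N L) hkN
  have hak2 := ha2 k
  have hjN : N ≤ (a k).2 := by omega
  refine ⟨(a k).2, hjN, ?_⟩
  have hTj : (T ((a k).2)).1 = h (a k) := by
    have hm := hmatchall k hk ((a k).2 - L) (by rw [hmaxk]; omega)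
    rw [hmaxk] at hm
    have harith : L + ((a k).2 - L) = (a k).2 := by omega
    rw [harith] at hm
    rw [hm, List.take_of_length_le (by rw [h_length hprof (ha1 k)])]
  have hlast := h_last' hprof (hxW ((a k).2)).1 (hlev ((a k).2))
    (by rw [h_length hprof (hxW ((a k).2)).1, hlev ((a k).2)]; omega)
  rw [← hlast, List.getElem_of_eq ((hxW ((a k).2)).2.2.2.trans hTj),
    h_last' hprof (ha1 k) rfl]
  exact ha4 k

end NBW

/-- `G` is rejecting iff for some `k` the labeling `λ^k` is legal. -/
theorem stmt12 {Q σ : Type} [Finite Q] (A : NBW Q σ) (w : ℕ → σ) (h : Q × ℕ → List Bool)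
    (hprof : A.IsProfileFun w h) :
    (¬ ∃ π : ℕ → Q × ℕ, A.AcceptingPath (A.Edge w) π) ↔
    (∃ (k : ℕ) (lam : Q × ℕ → Bool),
      A.IsRetroLabeling w h k lam ∧ A.Legal w h lam) := by
  constructor
  · intro hrej
    by_contra hno
    have hno' : ∀ k lam, ¬ (A.IsRetroLabeling w h k lam ∧ A.Legal w h lam) :=
      fun k lam hkl => hno ⟨k, lam, hkl⟩
    apply hrej
    apply NBW.rejecting_to_legal hprof
    intro k
    have hnl : ¬ A.Legal w h (NBW.lamK h k) :=
      fun hl => hno' k (NBW.lamK h k) ⟨NBW.lamK_retro hprof k, hl⟩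
    unfold NBW.Legal at hnl
    push_neg at hnl
    obtain ⟨u, hu, hfalse, hinf⟩ := hnl
    obtain ⟨j, hkj, hjlen, hjt⟩ := NBW.lamK_false_elim hfalse
    obtain ⟨a, ha1, ha2, ha3, ha4⟩ := NBW.exists_infinite_F hprof hu hinf hjlen hjt
    exact ⟨a, ha1, by omega, ha3, ha4⟩
  · rintro ⟨k, lam, hretro, hlegal⟩
    exact NBW.legal_to_rejecting hprof hretro hlegal
end

section
/- The k-retrospective ranking r^k is monotone with respect to the profile preorder within a level: for nodes u, u' on the same level, if h_u < h_{u'} then r^k(u) ≥ r^k(u'). -/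
theorem profLt_trans {a b c : List Bool} (h1 : ProfLt a b) (h2 : ProfLt b c) : ProfLt a c :=
  List.lex_trans (fun hxy hyz => lt_trans hxy hyz) h1 h2

/-- the `k`-retrospective ranking is monotone w.r.t. the profile
preorder within a level. -/
theorem stmt13 {Q σ : Type} [Fintype Q] (A : NBW Q σ) (w : ℕ → σ) (h : Q × ℕ → List Bool)
    (hprof : A.IsProfileFun w h) (k : ℕ) (lam : Q × ℕ → Bool)
    (hlam : A.IsRetroLabeling w h k lam)
    (u u' : Q × ℕ) (hu : A.InDag w u) (hu' : A.InDag w u') (hlev : u.2 = u'.2)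
    (hlt : ProfLt (h u) (h u')) :
    A.retroRank w h lam k (A.mBound) u' ≤ A.retroRank w h lam k (A.mBound) u := by
  classical
  set S : Set (List Bool) :=
    {p | ∃ v, A.InDag w v ∧ v.2 = u.2 ∧ lam v = true ∧ h v = p ∧ ProfLt (h u) p} with hS
  set S' : Set (List Bool) :=
    {p | ∃ v, A.InDag w v ∧ v.2 = u'.2 ∧ lam v = true ∧ h v = p ∧ ProfLt (h u') p} with hS'
  have hfin : S.Finite := by
    apply Set.Finite.subset (Set.finite_range (fun q : Q => h (q, u.2)))
    rintro p ⟨v, _, hv2, _, rfl, _⟩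
    exact ⟨v.1, show h (v.1, u.2) = h v by rw [← hv2]⟩
  have hsub : S' ⊆ S := by
    rintro p ⟨v, hvd, hv2, hvl, rfl, hvlt⟩
    exact ⟨v, hvd, by rw [hv2, hlev], hvl, rfl, profLt_trans hlt hvlt⟩
  have hle : A.alphaCount w h lam u' ≤ A.alphaCount w h lam u :=
    Set.ncard_le_ncard hsub hfin
  unfold NBW.retroRank
  rw [← hlev]
  by_cases hk : u.2 ≤ k
  · simp [hk]
  · simp only [if_neg hk]
    by_cases hl' : lam u' = true
    · have hmem : h u' ∈ S := ⟨u', hu', hlev.symm, hl', rfl, hlt⟩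
      have hnmem : h u' ∉ S' := by
        rintro ⟨v, _, _, _, hvp, hvlt⟩
        exact asymm_of (List.Lex (· < ·)) hvlt hvlt
      have hins : insert (h u') S' ⊆ S := Set.insert_subset hmem hsub
      have hcard : A.alphaCount w h lam u' + 1 ≤ A.alphaCount w h lam u := by
        have := Set.ncard_le_ncard hins hfin
        rwa [Set.ncard_insert_of_notMem hnmem (hfin.subset hsub)] at this
      have h2 : 2 * A.alphaCount w h lam u' + 1 < 2 * A.alphaCount w h lam u := by omega
      simp only [hl', if_true]
      by_cases hlu : lam u = true <;> simp [hlu] <;> omega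
    · simp only [Bool.not_eq_true] at hl'
      by_cases hlu : lam u = true <;> simp [hl', hlu] <;> omega
end

section
/- If the labeling λ^k is legal, then the k-retrospective ranking r^k is an odd ranking: every infinite path of G eventually gets trapped in an odd rank. -/
namespace ProfAux
set_option linter.unusedSectionVars false

lemma profLt_iff_lt (a b : List Bool) : ProfLt a b ↔ a < b := Iff.rfl

lemma profLe_iff_le (a b : List Bool) : ProfLe a b ↔ a ≤ b := by
  rw [le_iff_lt_or_eq]
  constructor
  · rintro (rfl | h); · exact Or.inr rfl
    · exact Or.inl h
  · rintro (h | rfl); · exact Or.inr h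
    · exact Or.inl rfl

lemma profLe_refl (a : List Bool) : ProfLe a a := Or.inl rfl

lemma profLe_trans {a b c : List Bool} (h1 : ProfLe a b) (h2 : ProfLe b c) : ProfLe a c := by
  rw [profLe_iff_le] at *; exact le_trans h1 h2

lemma profLe_antisymm {a b : List Bool} (h1 : ProfLe a b) (h2 : ProfLe b a) : a = b := by
  rw [profLe_iff_le] at *; exact le_antisymm h1 h2

lemma profLt_irrefl (a : List Bool) : ¬ ProfLt a a := lt_irrefl (α := List Bool) a

lemma not_profLt_iff {a b : List Bool} : (¬ ProfLt a b) ↔ ProfLe b a := by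
  rw [profLt_iff_lt, profLe_iff_le]; exact not_lt

lemma profLe_of_profLt {a b : List Bool} (h : ProfLt a b) : ProfLe a b := Or.inr h

lemma profLt_of_profLe_ne {a b : List Bool} (h : ProfLe a b) (hne : a ≠ b) : ProfLt a b :=
  h.resolve_left hne

lemma nil_profLe (l : List Bool) : ProfLe [] l := by
  cases l with
  | nil => exact Or.inl rfl
  | cons x t => exact Or.inr List.Lex.nil

/-- Lex order is preserved by `take`. -/
lemma profLe_take {a b : List Bool} (hab : ProfLe a b) : ∀ t, ProfLe (a.take t) (b.take t) := by
  induction a generalizing b with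
  | nil => intro t; simpa using nil_profLe _
  | cons x a' ih =>
    intro t
    rcases hab with rfl | hlt
    · exact Or.inl rfl
    · cases hlt with
      | rel hr =>
        cases t with
        | zero => exact Or.inl rfl
        | succ s => exact Or.inr (List.Lex.rel hr)
      | cons hc =>
        cases t with
        | zero => exact Or.inl rfl
        | succ s =>
          rcases ih (Or.inr hc) s with he | hl
          · simp only [List.take_succ_cons]
            rw [he]
            exact Or.inl rfl
          · exact Or.inr (List.Lex.cons hl)

lemma profLt_append_last {a : List Bool} {x y : Bool} (h : ProfLt (a ++ [x]) (a ++ [y])) :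
    x < y := by
  induction a with
  | nil =>
    cases h with
    | rel hr => exact hr
    | cons hc => cases hc
  | cons z a' ih =>
    cases h with
    | rel hr => exact absurd hr (lt_irrefl z)
    | cons hc => exact ih hc

lemma profLe_append_last {a : List Bool} {x y : Bool} (h : ProfLe (a ++ [x]) (a ++ [y])) :
    x = y ∨ x < y := by
  rcases h with he | hl
  · left; exact by have := List.append_cancel_left he; injection this
  · right; exact profLt_append_last hl

lemma profLt_append_same {a b : List Bool} (hlen : a.length = b.length) (l : List Bool)
    (h : ProfLt a b) : ProfLt (a ++ l) (b ++ l) := by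
  induction h with
  | nil => simp at hlen
  | rel hr => exact List.Lex.rel hr
  | cons hc ih => exact List.Lex.cons (ih (by simpa using hlen))

lemma profLe_append_same {a b : List Bool} (hlen : a.length = b.length) (l : List Bool)
    (h : ProfLe a b) : ProfLe (a ++ l) (b ++ l) := by
  rcases h with rfl | hl
  · exact Or.inl rfl
  · exact Or.inr (profLt_append_same hlen l hl)

end ProfAux
namespace ProfAux
set_option linter.unusedSectionVars false

open NBW

variable {Q σ : Type} [Finite Q] {A : NBW Q σ} {w : ℕ → σ} {h : Q × ℕ → List Bool}

lemma inDag_of_finRunTo {p : ℕ → Q} {v : Q × ℕ} (hp : A.FinRunTo w p v) : A.InDag w v :=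
  ⟨p, hp.1, hp.2.1, hp.2.2⟩

lemma finRunTo_of_inDag {v : Q × ℕ} (hv : A.InDag w v) : ∃ p, A.FinRunTo w p v := hv

lemma length_h (hprof : A.IsProfileFun w h) {v : Q × ℕ} (hv : A.InDag w v) :
    (h v).length = v.2 + 1 := by
  obtain ⟨⟨p, hp, hpe⟩, -⟩ := hprof v hv
  rw [← hpe]
  simp [NBW.profileOf]

lemma profileOf_succ (p : ℕ → Q) (n : ℕ) :
    A.profileOf p (n + 1) = A.profileOf p n ++ [A.acc (p (n + 1))] := by
  simp [NBW.profileOf, List.range_succ]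

lemma h_eq_append (hprof : A.IsProfileFun w h) {v : Q × ℕ} (hv : A.InDag w v) :
    ∃ a, h v = a ++ [A.acc v.1] ∧ a.length = v.2 := by
  obtain ⟨⟨p, hp, hpe⟩, -⟩ := hprof v hv
  refine ⟨(List.range v.2).map fun j => A.acc (p j), ?_, by simp⟩
  rw [← hpe, ← hp.2.2]
  simp [NBW.profileOf, List.range_succ]

/-- acceptance bit of the endpoint from the profile. -/
lemma acc_eq_of_h_eq (hprof : A.IsProfileFun w h) {v v' : Q × ℕ}
    (hv : A.InDag w v) (hv' : A.InDag w v') (hlev : v.2 = v'.2) (hh : h v = h v') :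
    A.acc v.1 = A.acc v'.1 := by
  obtain ⟨a, ha, hal⟩ := h_eq_append hprof hv
  obtain ⟨a', ha', hal'⟩ := h_eq_append hprof hv'
  rw [ha, ha'] at hh
  have : a = a' ∧ [A.acc v.1] = [A.acc v'.1] :=
    List.append_inj hh (by rw [hal, hal', hlev])
  injection this.2

lemma pred_exists {v : Q × ℕ} {n : ℕ} (hv : A.InDag w v) (hn : v.2 = n + 1) :
    ∃ u, A.Edge w u v ∧ u.2 = n := by
  obtain ⟨p, hp0, hpt, hpe⟩ := hv
  refine ⟨(p n, n), ⟨⟨p, hp0, fun j hj => hpt j (by omega), rfl⟩, by omega, ?_⟩, rfl⟩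
  have := hpt n (by omega)
  rw [show n + 1 = v.2 by omega, hpe] at this
  exact this

lemma preds_finite (v : Q × ℕ) : {u | A.Edge w u v}.Finite := by
  apply Set.Finite.subset (Set.finite_range fun q : Q => (q, v.2 - 1))
  rintro ⟨q, m⟩ hu
  exact ⟨q, by simp [show m = v.2 - 1 by have := hu.2.1; omega]⟩

lemma edge_extend {u v : Q × ℕ} {p : ℕ → Q} (he : A.Edge w u v) (hp : A.FinRunTo w p u) :
    ∃ p', A.FinRunTo w p' v ∧ A.profileOf p' v.2 = A.profileOf p u.2 ++ [A.acc v.1] := by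
  obtain ⟨hu, hlev, htr⟩ := he
  refine ⟨fun t => if t = v.2 then v.1 else p t, ⟨?_, ?_, by simp⟩, ?_⟩
  · simp only [if_neg (by omega : (0:ℕ) ≠ v.2)]
    exact hp.1
  · intro j hj
    rcases Nat.lt_or_ge (j + 1) v.2 with hlt | hge
    · simp only [if_neg (by omega : j + 1 ≠ v.2), if_neg (by omega : j ≠ v.2)]
      exact hp.2.1 j (by omega)
    · have hj1 : j + 1 = v.2 := by omega
      have hju : j = u.2 := by omega
      simp only [if_pos hj1, if_neg (by omega : j ≠ v.2)]
      rw [hju, hp.2.2]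
      exact htr
  · rw [hlev, profileOf_succ]
    congr 1
    · unfold NBW.profileOf
      apply List.map_congr_left
      intro j hj
      simp only [List.mem_range] at hj
      simp only [if_neg (show j ≠ u.2 + 1 by omega)]
    · simp

lemma h_succ_le (hprof : A.IsProfileFun w h) {u v : Q × ℕ} (he : A.Edge w u v) :
    ProfLe (h u ++ [A.acc v.1]) (h v) := by
  obtain ⟨⟨p, hp, hpe⟩, -⟩ := hprof u he.1
  obtain ⟨p', hp', hpe'⟩ := edge_extend he hp
  have := (hprof v (inDag_of_finRunTo hp')).2 p' hp'
  rwa [hpe', hpe] at this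

lemma edge_inDag_right (he : A.Edge w u v) : A.InDag w v := by
  obtain ⟨p, hp⟩ := finRunTo_of_inDag he.1
  obtain ⟨p', hp', -⟩ := edge_extend he hp
  exact inDag_of_finRunTo hp'

end ProfAux
namespace ProfAux

open NBW

set_option linter.unusedSectionVars false
set_option maxHeartbeats 1000000

variable {Q σ : Type} [Finite Q] {A : NBW Q σ} {w : ℕ → σ} {h : Q × ℕ → List Bool}

/-- Existence of a lex-maximal predecessor in the pruned DAG sense. -/
lemma exists_maxpred (hprof : A.IsProfileFun w h) {v : Q × ℕ} {n : ℕ}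
    (hv : A.InDag w v) (hn : v.2 = n + 1) :
    ∃ u, A.Edge w u v ∧ u.2 = n ∧ (∀ u', A.Edge w u' v → ¬ ProfLt (h u) (h u')) ∧
      h v = h u ++ [A.acc v.1] := by
  classical
  have hfin := preds_finite (A := A) (w := w) v
  obtain ⟨u₁, hu₁, hu₁n⟩ := pred_exists hv hn
  have hne : hfin.toFinset.Nonempty := ⟨u₁, hfin.mem_toFinset.mpr hu₁⟩
  obtain ⟨u, hu, hmax⟩ := hfin.toFinset.exists_max_image (fun x => h x) hne
  have hedge : A.Edge w u v := hfin.mem_toFinset.mp hu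
  have hmax' : ∀ u', A.Edge w u' v → ¬ ProfLt (h u) (h u') := by
    intro u' he'
    rw [not_profLt_iff, profLe_iff_le]
    exact hmax u' (hfin.mem_toFinset.mpr he')
  have hulev : u.2 = n := by have := hedge.2.1; omega
  refine ⟨u, hedge, hulev, hmax', ?_⟩
  -- ≥ direction
  have hge : ProfLe (h u ++ [A.acc v.1]) (h v) := h_succ_le hprof hedge
  -- ≤ direction
  obtain ⟨⟨p, hp, hpe⟩, -⟩ := hprof v hv
  have hu0 : A.FinRunTo w p (p n, n) :=
    ⟨hp.1, fun j hj => hp.2.1 j (by omega), rfl⟩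
  have hu0dag : A.InDag w (p n, n) := inDag_of_finRunTo hu0
  have hu0edge : A.Edge w (p n, n) v := by
    refine ⟨hu0dag, by omega, ?_⟩
    have := hp.2.1 n (by omega)
    rw [show n + 1 = v.2 by omega, hp.2.2] at this
    exact this
  have h1 : ProfLe (A.profileOf p n) (h (p n, n)) := (hprof _ hu0dag).2 p hu0
  have h2 : ProfLe (h (p n, n)) (h u) := by
    rw [profLe_iff_le]
    exact hmax _ (hfin.mem_toFinset.mpr hu0edge)
  have hlen1 : (A.profileOf p n).length = (h (p n, n)).length := by
    rw [length_h hprof hu0dag]; simp [NBW.profileOf]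
  have hlen2 : (h (p n, n)).length = (h u).length := by
    rw [length_h hprof hu0dag, length_h hprof hedge.1, hulev]
  have hpv : h v = A.profileOf p n ++ [A.acc v.1] := by
    rw [← hpe, hn, profileOf_succ]
    rw [show p (n+1) = v.1 by rw [← hp.2.2, hn]]
  have hle : ProfLe (h v) (h u ++ [A.acc v.1]) := by
    rw [hpv]
    exact profLe_trans (profLe_append_same hlen1 _ h1) (profLe_append_same hlen2 _ h2)
  exact profLe_antisymm hle hge

open Classical in
/-- chosen maximal G'-predecessor. -/
noncomputable def anc (A : NBW Q σ) (w : ℕ → σ) (h : Q × ℕ → List Bool) (v : Q × ℕ) : Q × ℕ :=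
  if hv : ∃ u, A.Edge w u v ∧ u.2 = v.2 - 1 ∧ (∀ u', A.Edge w u' v → ¬ ProfLt (h u) (h u')) ∧
      h v = h u ++ [A.acc v.1] then hv.choose else v

lemma anc_spec (hprof : A.IsProfileFun w h) {v : Q × ℕ}
    (hv : A.InDag w v) (hn : 1 ≤ v.2) :
    A.Edge w (anc A w h v) v ∧ (anc A w h v).2 = v.2 - 1 ∧ A.Edge' w h (anc A w h v) v ∧
      h v = h (anc A w h v) ++ [A.acc v.1] := by
  classical
  obtain ⟨u, h1, h2, h3, h4⟩ := exists_maxpred hprof hv (show v.2 = (v.2 - 1) + 1 by omega)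
  have hex : ∃ u, A.Edge w u v ∧ u.2 = v.2 - 1 ∧ (∀ u', A.Edge w u' v → ¬ ProfLt (h u) (h u')) ∧
      h v = h u ++ [A.acc v.1] := ⟨u, h1, h2, h3, h4⟩
  rw [anc, dif_pos hex]
  obtain ⟨e1, e2, e3, e4⟩ := hex.choose_spec
  exact ⟨e1, e2, ⟨e1, e3⟩, e4⟩

/-- iterated ancestors: facts. -/
lemma anc_iter (hprof : A.IsProfileFun w h) :
    ∀ (d : ℕ) {v : Q × ℕ}, A.InDag w v → d ≤ v.2 →
      A.InDag w ((anc A w h)^[d] v) ∧ ((anc A w h)^[d] v).2 = v.2 - d ∧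
      h ((anc A w h)^[d] v) = (h v).take (v.2 - d + 1) ∧
      Relation.ReflTransGen (A.Edge' w h) ((anc A w h)^[d] v) v := by
  intro d
  induction d with
  | zero =>
    intro v hv _
    refine ⟨hv, by simp, ?_, Relation.ReflTransGen.refl⟩
    simp [List.take_of_length_le, length_h hprof hv]
  | succ d ih =>
    intro v hv hd
    obtain ⟨hdag, hlev, hprofile, hrtg⟩ := ih hv (by omega)
    set y := (anc A w h)^[d] v with hy
    have hy1 : 1 ≤ y.2 := by omega
    obtain ⟨he, helev, he', happ⟩ := anc_spec hprof hdag hy1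
    rw [Function.iterate_succ_apply', ← hy]
    have hanclen : (h (anc A w h y)).length = y.2 := by
      rw [length_h hprof he.1, helev]; omega
    have htake : h (anc A w h y) = (h y).take y.2 := by
      rw [happ, ← hanclen, List.take_left]
    refine ⟨he.1, by omega, ?_, Relation.ReflTransGen.head he' hrtg⟩
    rw [htake, hprofile, hlev, List.take_take]
    congr 1
    omega

/-- the label is determined by the profile (at a fixed level). -/
lemma lam_eq_of_h_eq (hprof : A.IsProfileFun w h) {k : ℕ} {lam : Q × ℕ → Bool}
    (hlam : A.IsRetroLabeling w h k lam) :
    ∀ (n : ℕ) {v v' : Q × ℕ}, A.InDag w v → A.InDag w v' → v.2 = n → v'.2 = n →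
      h v = h v' → lam v = lam v' := by
  intro n
  induction n using Nat.strong_induction_on with
  | _ n ih =>
    intro v v' hv hv' hn hn' hh
    rcases le_or_gt n k with hnk | hnk
    · rw [hlam.1 v hv (by omega), hlam.1 v' hv' (by omega)]
    · have hacc : A.acc v.1 = A.acc v'.1 := acc_eq_of_h_eq hprof hv hv' (by omega) hh
      rcases Bool.eq_false_or_eq_true (A.acc v.1) with ht | hf
      · rw [hlam.2.1 v hv (by omega) ht, hlam.2.1 v' hv' (by omega) (by rw [← hacc]; exact ht)]
      · -- non-accepting: inherit from ancestors
        have hacc' : A.acc v'.1 = false := by rw [← hacc]; exact hf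
        have hn1 : 1 ≤ v.2 := by omega
        have hn1' : 1 ≤ v'.2 := by omega
        obtain ⟨he, helev, he', happ⟩ := anc_spec hprof hv hn1
        obtain ⟨hf2, hf2lev, hf2', happ'⟩ := anc_spec hprof hv' hn1'
        have e1 : lam v = lam (anc A w h v) := hlam.2.2 _ v (by omega) hf he'
        have e2 : lam v' = lam (anc A w h v') := hlam.2.2 _ v' (by omega) hacc' hf2'
        rw [e1, e2]
        refine ih (n-1) (by omega) he.1 hf2.1 (by omega) (by omega) ?_
        have l1 : (h (anc A w h v)).length = n := by rw [length_h hprof he.1]; omega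
        have l2 : (h (anc A w h v')).length = n := by rw [length_h hprof hf2.1]; omega
        have := hh
        rw [happ, happ', hacc] at this
        exact (List.append_inj this (by omega)).1

end ProfAux
namespace ProfAux

open NBW

set_option linter.unusedSectionVars false
set_option maxHeartbeats 1000000

variable {Q σ : Type} [Finite Q] {A : NBW Q σ} {w : ℕ → σ} {h : Q × ℕ → List Bool}
  {π : ℕ → Q × ℕ}

lemma path_level (hπ : A.IsPath (A.Edge w) π) : ∀ i, (π i).2 = i := by
  intro i
  induction i with
  | zero => exact hπ.2.1
  | succ i ih => rw [(hπ.2.2 i).2.1, ih]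

lemma path_inDag (hπ : A.IsPath (A.Edge w) π) (i : ℕ) : A.InDag w (π i) := (hπ.2.2 i).1

lemma chain_take (hprof : A.IsProfileFun w h) (hπ : A.IsPath (A.Edge w) π) :
    ∀ t a b, a ≤ b → t ≤ a + 1 → ProfLe ((h (π a)).take t) ((h (π b)).take t) := by
  have single : ∀ b t, t ≤ b + 1 → ProfLe ((h (π b)).take t) ((h (π (b+1))).take t) := by
    intro b t ht
    have hle := h_succ_le hprof (hπ.2.2 b)
    have := profLe_take hle t
    rwa [List.take_append_of_le_length
      (by rw [length_h hprof (path_inDag hπ b), path_level hπ b]; omega)] at this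
  intro t a b hab ht
  induction b, hab using Nat.le_induction with
  | base => exact profLe_refl _
  | succ b hab ih => exact profLe_trans ih (single b t (by omega))

lemma mono_stab {β : Type} [PartialOrder β] (f : ℕ → β)
    (mono : ∀ a b, a ≤ b → f a ≤ f b) (fin : (Set.range f).Finite) :
    ∃ J, ∀ j, J ≤ j → f j = f J := by
  obtain ⟨x, hx, hmax⟩ := fin.exists_maximalFor id _ (Set.range_nonempty f)
  obtain ⟨J, rfl⟩ := hx
  exact ⟨J, fun j hj => le_antisymm (hmax ⟨j, rfl⟩ (mono J j hj)) (mono J j hj)⟩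

lemma exists_stab (hprof : A.IsProfileFun w h) (hπ : A.IsPath (A.Edge w) π) (t : ℕ) :
    ∃ J, t + 1 ≤ J ∧ ∀ j, J ≤ j → (h (π j)).take (t+1) = (h (π J)).take (t+1) := by
  obtain ⟨J₀, hJ₀⟩ := mono_stab (fun m => (h (π (m + (t+1)))).take (t+1))
    (fun a b hab => by
      rw [← profLe_iff_le]
      exact chain_take hprof hπ (t+1) (a + (t+1)) (b + (t+1)) (by omega) (by omega))
    (Set.Finite.subset (List.finite_length_le Bool (t+1))
      (by rintro x ⟨m, rfl⟩; simpa using List.length_take_le _ _))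
  refine ⟨J₀ + (t+1), by omega, fun j hj => ?_⟩
  have h1 := hJ₀ (j - (t+1)) (by omega)
  rw [show j - (t+1) + (t+1) = j by omega] at h1
  exact h1

section Stable

variable {k : ℕ} {lam : Q × ℕ → Bool} {L : ℕ → List Bool} {Jf : ℕ → ℕ}

/-- At every level `> k` there is a ⊤-labeled node with the limit profile `L i`. -/
lemma top_class (hprof : A.IsProfileFun w h) (hlam : A.IsRetroLabeling w h k lam)
    (hleg : A.Legal w h lam) (hπ : A.IsPath (A.Edge w) π)
    (hstab : ∀ i j, Jf i ≤ j → (h (π j)).take (i+1) = L i) :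
    ∀ i, k < i → ∃ y, A.InDag w y ∧ y.2 = i ∧ h y = L i ∧ lam y = true ∧ A.acc y.1 = false := by
  intro i hk
  set m := max (Jf i) i with hm
  set g : ℕ → Q := fun j => ((anc A w h)^[j - i] (π j)).1 with hg
  -- pigeonhole: some state recurs as the level-i ancestor
  have hpig : ∃ q : Q, {j | m ≤ j ∧ g j = q}.Infinite := by
    by_contra hc
    push_neg at hc
    have hsub : Set.Ici m ⊆ ⋃ q : Q, {j | m ≤ j ∧ g j = q} := by
      intro j hj
      exact Set.mem_iUnion.mpr ⟨g j, hj, rfl⟩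
    exact Set.Ici_infinite m (Set.Finite.subset (Set.finite_iUnion hc) hsub)
  obtain ⟨q, hq⟩ := hpig
  have hanc : ∀ j, m ≤ j → ((anc A w h)^[j - i] (π j)) = (g j, i) ∧
      A.InDag w ((anc A w h)^[j - i] (π j)) ∧
      h ((anc A w h)^[j - i] (π j)) = L i ∧
      Relation.ReflTransGen (A.Edge' w h) ((anc A w h)^[j - i] (π j)) (π j) := by
    intro j hj
    have hij : i ≤ j := le_trans (le_max_right _ _) hj
    have hJij : Jf i ≤ j := le_trans (le_max_left _ _) hj
    have hdag := path_inDag hπ j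
    have hlev := path_level hπ j
    obtain ⟨hd, hl, hp, hr⟩ := anc_iter hprof (j - i) hdag (by omega)
    have hl' : ((anc A w h)^[j - i] (π j)).2 = i := by omega
    have hp' : h ((anc A w h)^[j - i] (π j)) = L i := by
      rw [hp, hlev, show j - (j - i) + 1 = i + 1 by omega]
      exact hstab i j hJij
    exact ⟨Prod.ext rfl hl', hd, hp', hr⟩
  obtain ⟨j₀, hj₀⟩ := hq.nonempty
  obtain ⟨heq₀, hdag₀, hp₀, -⟩ := hanc j₀ hj₀.1
  rw [hj₀.2] at heq₀
  have hdagq : A.InDag w (q, i) := by rw [← heq₀]; exact hdag₀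
  have hdesc : π '' {j | m ≤ j ∧ g j = q} ⊆
      {u | Relation.ReflTransGen (A.Edge' w h) (q, i) u} := by
    rintro x ⟨j, hj, rfl⟩
    obtain ⟨heq, -, -, hr⟩ := hanc j hj.1
    rw [hj.2] at heq
    rw [heq] at hr
    exact hr
  have himg : (π '' {j | m ≤ j ∧ g j = q}).Infinite := by
    apply hq.image
    intro a ha b hb hab
    have := congrArg Prod.snd hab
    rwa [path_level hπ a, path_level hπ b] at this
  have hninf : ¬ A.FiniteIn' w h (q, i) := fun hfin => himg (hfin.subset hdesc)
  have hlamq : lam (q, i) = true := by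
    rcases Bool.eq_false_or_eq_true (lam (q, i)) with ht | hf
    · exact ht
    · exact absurd (hleg _ hdagq hf) hninf
  have haccq : A.acc q = false := by
    rcases Bool.eq_false_or_eq_true (A.acc q) with ht | hf
    · rw [hlam.2.1 (q, i) hdagq (by omega) ht] at hlamq
      exact absurd hlamq (by simp)
    · exact hf
  exact ⟨(q, i), hdagq, rfl, by rw [← heq₀]; exact hp₀, hlamq, haccq⟩

lemma L_take (hstab : ∀ i j, Jf i ≤ j → (h (π j)).take (i+1) = L i) (i : ℕ) :
    (L (i+1)).take (i+1) = L i := by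
  set j := max (Jf i) (Jf (i+1)) with hj
  rw [← hstab (i+1) j (le_max_right _ _), ← hstab i j (le_max_left _ _), List.take_take]
  congr 1
  omega

lemma L_succ (hprof : A.IsProfileFun w h) (hlam : A.IsRetroLabeling w h k lam)
    (hleg : A.Legal w h lam) (hπ : A.IsPath (A.Edge w) π)
    (hstab : ∀ i j, Jf i ≤ j → (h (π j)).take (i+1) = L i) :
    ∀ i, k < i + 1 → L (i+1) = L i ++ [false] := by
  intro i hk
  obtain ⟨y, hy, hylev, hyh, hylam, hyacc⟩ := top_class hprof hlam hleg hπ hstab (i+1) hk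
  obtain ⟨-, helev, -, happ⟩ := anc_spec hprof hy (by omega)
  have hanclen : (h (anc A w h y)).length = i + 1 := by
    have := anc_spec hprof hy (by omega)
    rw [length_h hprof this.1.1, helev, hylev]
    omega
  have : h (anc A w h y) = (L (i+1)).take (i+1) := by
    rw [← hyh, happ, ← hanclen, List.take_left]
  rw [← hyh, happ, this, L_take hstab, hyacc]

lemma eq_L (hprof : A.IsProfileFun w h) (hlam : A.IsRetroLabeling w h k lam)
    (hleg : A.Legal w h lam) (hπ : A.IsPath (A.Edge w) π)
    (hstab : ∀ i j, Jf i ≤ j → (h (π j)).take (i+1) = L i) :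
    ∀ j, Jf (k+1) ≤ j → k + 1 ≤ j → h (π j) = L j := by
  intro j hJ hkj
  have hlen : (h (π j)).length = j + 1 := by
    rw [length_h hprof (path_inDag hπ j), path_level hπ j]
  have key : ∀ i, k + 1 ≤ i → i ≤ j → (h (π j)).take (i+1) = L i := by
    intro i hki
    induction i, hki using Nat.le_induction with
    | base => intro _; exact hstab (k+1) j hJ
    | succ i hki ih =>
      intro hij
      have hi : i ≤ j := by omega
      have htk : (h (π j)).take (i+1) = L i := ih hi
      have hb : (h (π j)).take (i+2) = L i ++ [(h (π j))[i+1]] := by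
        rw [List.take_succ, htk, List.getElem?_eq_getElem (by omega)]
        rfl
      have hle : ProfLe ((h (π j)).take (i+2)) (L (i+1)) := by
        set j' := max j (Jf (i+1)) with hj'
        have h1 := chain_take hprof hπ (i+2) j j' (le_max_left _ _) (by omega)
        rwa [hstab (i+1) j' (le_max_right _ _)] at h1
      have hsucc : L (i+1) = L i ++ [false] := L_succ hprof hlam hleg hπ hstab i (by omega)
      rw [hb, hsucc] at hle
      rcases profLe_append_last hle with he | hlt
      · rw [hb, hsucc, he]
      · exact absurd hlt (by simp [Bool.lt_iff])
  have := key j (by omega) le_rfl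
  rwa [← hlen, List.take_length] at this

end Stable

end ProfAux
namespace ProfAux

open NBW

set_option linter.unusedSectionVars false
set_option maxHeartbeats 1000000

variable {Q σ : Type} [Finite Q] {A : NBW Q σ} {w : ℕ → σ} {h : Q × ℕ → List Bool}
  {π : ℕ → Q × ℕ} {k : ℕ} {lam : Q × ℕ → Bool} {L : ℕ → List Bool} {Jf : ℕ → ℕ}

lemma alphaSet_finite (u : Q × ℕ) :
    {p : List Bool | ∃ v, A.InDag w v ∧ v.2 = u.2 ∧ lam v = true ∧ h v = p ∧
      ProfLt (h u) p}.Finite := by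
  apply Set.Finite.subset ((Set.finite_range fun q : Q => (q, u.2)).image h)
  rintro p ⟨v, hv, hlev, -, hvh, -⟩
  exact ⟨v, ⟨v.1, by rw [← hlev]⟩, hvh⟩

lemma alpha_mono (hprof : A.IsProfileFun w h) (hlam : A.IsRetroLabeling w h k lam)
    (hleg : A.Legal w h lam) (hπ : A.IsPath (A.Edge w) π)
    (hstab : ∀ i j, Jf i ≤ j → (h (π j)).take (i+1) = L i) :
    ∀ j, Jf (k+1) ≤ j → k + 1 ≤ j →
      A.alphaCount w h lam (π (j+1)) ≤ A.alphaCount w h lam (π j) := by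
  intro j hJ hkj
  unfold NBW.alphaCount
  have hLj : h (π j) = L j := eq_L hprof hlam hleg hπ hstab j hJ hkj
  have hLj1 : h (π (j+1)) = L (j+1) := by
    refine eq_L hprof hlam hleg hπ hstab (j+1) (by omega) (by omega)
  have hsucc : L (j+1) = L j ++ [false] := L_succ hprof hlam hleg hπ hstab j (by omega)
  have key : ∀ p ∈ {p : List Bool | ∃ v, A.InDag w v ∧ v.2 = (π (j+1)).2 ∧ lam v = true ∧
        h v = p ∧ ProfLt (h (π (j+1))) p},
      (p.dropLast ∈ {p : List Bool | ∃ v, A.InDag w v ∧ v.2 = (π j).2 ∧ lam v = true ∧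
        h v = p ∧ ProfLt (h (π j)) p}) ∧ p = p.dropLast ++ [false] := by
    rintro p ⟨v, hv, hvlev, hvlam, hvh, hvlt⟩
    have hvlev' : v.2 = j + 1 := by rw [hvlev, path_level hπ]
    have hvacc : A.acc v.1 = false := by
      rcases Bool.eq_false_or_eq_true (A.acc v.1) with ht | hf
      · rw [hlam.2.1 v hv (by omega) ht] at hvlam; exact absurd hvlam (by simp)
      · exact hf
    obtain ⟨he, helev, he', happ⟩ := anc_spec hprof hv (by omega)
    rw [hvacc] at happ
    have hdl : p.dropLast = h (anc A w h v) := by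
      rw [← hvh, happ, List.dropLast_concat]
    have hlamanc : lam (anc A w h v) = true := by
      rw [← hlam.2.2 _ v (by omega) hvacc he', hvlam]
    have hanclen : (h (anc A w h v)).length = j + 1 := by
      rw [length_h hprof he.1, helev]; omega
    have hple : ProfLe (L j) p.dropLast := by
      have h1 : ProfLe (L (j+1)) p := Or.inr (by rw [← hLj1]; exact hvlt)
      have h2 := profLe_take h1 (j+1)
      rw [L_take hstab] at h2
      have h3 : p.take (j+1) = p.dropLast := by
        rw [← hvh, happ, List.take_left' hanclen, ← happ, hvh, hdl]
      rwa [h3] at h2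
    have hplt : ProfLt (h (π j)) p.dropLast := by
      rw [hLj]
      rcases hple with heq | hlt
      · exfalso
        have : p = L (j+1) := by
          rw [← hvh, happ, ← hdl, ← heq, ← hsucc]
        rw [← hLj1] at this
        rw [this] at hvlt
        exact profLt_irrefl _ hvlt
      · exact hlt
    refine ⟨⟨anc A w h v, he.1, ?_, hlamanc, hdl.symm, hplt⟩, ?_⟩
    · rw [helev, path_level hπ j, hvlev']
      omega
    · rw [← hvh, happ, List.dropLast_concat]
  refine Set.ncard_le_ncard_of_injOn (fun p => p.dropLast)
    (fun p hp => (key p hp).1) ?_ (alphaSet_finite (π j))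
  intro p hp p' hp' hdl
  simp only [] at hdl
  rw [(key p hp).2, (key p' hp').2, hdl]

lemma lam_pi (hprof : A.IsProfileFun w h) (hlam : A.IsRetroLabeling w h k lam)
    (hleg : A.Legal w h lam) (hπ : A.IsPath (A.Edge w) π)
    (hstab : ∀ i j, Jf i ≤ j → (h (π j)).take (i+1) = L i) :
    ∀ j, Jf (k+1) ≤ j → k + 1 ≤ j → lam (π j) = true := by
  intro j hJ hkj
  obtain ⟨y, hy, hylev, hyh, hylam, -⟩ :=
    top_class hprof hlam hleg hπ hstab j (by omega)
  rw [← hylam]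
  refine lam_eq_of_h_eq hprof hlam j (path_inDag hπ j) hy (path_level hπ j) hylev ?_
  rw [eq_L hprof hlam hleg hπ hstab j hJ hkj, hyh]

end ProfAux
/-- if `λ^k` is legal then `r^k` is an odd ranking: every infinite
initial path eventually stabilizes at an odd rank. -/
theorem stmt16 {Q σ : Type} [Fintype Q] (A : NBW Q σ) (w : ℕ → σ) (h : Q × ℕ → List Bool)
    (hprof : A.IsProfileFun w h) (k : ℕ) (lam : Q × ℕ → Bool)
    (hlam : A.IsRetroLabeling w h k lam) (hleg : A.Legal w h lam) :
    ∀ π : ℕ → Q × ℕ, A.IsPath (A.Edge w) π →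
      ∃ N, Odd (A.retroRank w h lam k (A.mBound) (π N)) ∧
        ∀ i, N ≤ i →
          A.retroRank w h lam k (A.mBound) (π i) =
          A.retroRank w h lam k (A.mBound) (π N) := by
  classical
  intro π hπ
  obtain ⟨Jf, hJf⟩ := Classical.axiomOfChoice (ProfAux.exists_stab hprof hπ)
  set L : ℕ → List Bool := fun i => (h (π (Jf i))).take (i+1) with hL
  have hstab : ∀ i j, Jf i ≤ j → (h (π j)).take (i+1) = L i := fun i j hj =>
    (hJf i).2 j hj
  set N₁ := max (Jf (k+1)) (k+1) with hN₁
  set f : ℕ → ℕ := fun j => A.alphaCount w h lam (π j) with hf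
  have hmono : ∀ j, N₁ ≤ j → f (j+1) ≤ f j := fun j hj =>
    ProfAux.alpha_mono hprof hlam hleg hπ hstab j
      (le_trans (le_max_left _ _) hj) (le_trans (le_max_right _ _) hj)
  have hchain : ∀ a b, N₁ ≤ a → a ≤ b → f b ≤ f a := by
    intro a b ha hab
    induction b, hab using Nat.le_induction with
    | base => exact le_rfl
    | succ b hab ih => exact le_trans (hmono b (by omega)) ih
  -- the antitone ℕ-valued sequence stabilizes
  set T : Set ℕ := {n | ∃ j, N₁ ≤ j ∧ f j = n} with hT
  have hTne : T.Nonempty := ⟨f N₁, N₁, le_rfl, rfl⟩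
  obtain ⟨N, hNge, hfN⟩ : ∃ N, N₁ ≤ N ∧ f N = sInf T := Nat.sInf_mem hTne
  have hstable : ∀ i, N ≤ i → f i = f N := by
    intro i hi
    have h1 : f i ≤ f N := hchain N i hNge hi
    have h2 : sInf T ≤ f i := Nat.sInf_le ⟨i, by omega, rfl⟩
    omega
  have hlamtrue : ∀ i, N ≤ i → lam (π i) = true := fun i hi =>
    ProfAux.lam_pi hprof hlam hleg hπ hstab i (by omega) (by omega)
  have hrank : ∀ i, N ≤ i →
      A.retroRank w h lam k (A.mBound) (π i) = 2 * f i + 1 := by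
    intro i hi
    unfold NBW.retroRank
    rw [ProfAux.path_level hπ i, if_neg (by omega), if_pos (hlamtrue i hi)]
  refine ⟨N, ?_, ?_⟩
  · rw [hrank N le_rfl]
    exact ⟨f N, by ring⟩
  · intro i hi
    rw [hrank i hi, hrank N le_rfl, hstable i hi]
end
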